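/- In any accepting computation of the queue automaton, the induced matching between positions of the input (pairing each enqueued symbol with the input symbol that later matches it) is non-nesting: it never happens that one matched pair (j,ℓ) strictly contains another matched pair (p,q), i.e., j < p < q < ℓ is impossible. -/

import Mathlib

/-- `Run Q i x P` : starting with queue `Q` (a list of pairs of an input
position and the symbol enqueued from it), with the next input symbol at
position `i` and remaining input `x`, the queue automaton can reach the
accepting configuration (empty queue, empty input), producing the list `P`
of matched pairs `(enqueue position, match position)` along the way.
At each step the automaton either enqueues the next input symbol (recording
its position) or matches it with the front of the queue, pairing the front
symbol's original position with the current position. -/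
inductive Run {α : Type*} : List (ℕ × α) → ℕ → List α → List (ℕ × ℕ) → Prop
  | done (i : ℕ) : Run [] i [] []
  | enq {Q : List (ℕ × α)} {i : ℕ} {a : α} {x : List α} {P : List (ℕ × ℕ)} :
      Run (Q ++ [(i, a)]) (i + 1) x P → Run Q i (a :: x) P
  | deq {Q : List (ℕ × α)} {i j : ℕ} {a : α} {x : List α} {P : List (ℕ × ℕ)} :
      Run Q (i + 1) x P → Run ((j, a) :: Q) i (a :: x) ((j, i) :: P)


/-- Key invariant: if the queue's positions are all `< i` and pairwise
increasing along the queue, then the produced matched pairs are pairwise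
increasing in both coordinates, every match position is `≥ i`, and every
enqueue position either comes from the current queue or is `≥ i`. -/
theorem run_key {α : Type*} {Q : List (ℕ × α)} {i : ℕ} {x : List α}
    {P : List (ℕ × ℕ)} (hrun : Run Q i x P)
    (hQ : ∀ e ∈ Q, e.1 < i)
    (hC : Q.Pairwise (fun a b => a.1 < b.1)) :
    P.Pairwise (fun a b => a.1 < b.1 ∧ a.2 < b.2) ∧
    ∀ e ∈ P, i ≤ e.2 ∧ ((∃ qe ∈ Q, e.1 = qe.1) ∨ i ≤ e.1) := by
  induction hrun with
  | done i => simp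
  | @enq Q i a x P _ ih =>
    have hQ' : ∀ e ∈ Q ++ [(i, a)], e.1 < i + 1 := by
      intro e he
      rcases List.mem_append.1 he with h | h
      · exact Nat.lt_succ_of_lt (hQ e h)
      · simp at h; simp [h]
    have hC' : (Q ++ [(i, a)]).Pairwise (fun a b => a.1 < b.1) := by
      rw [List.pairwise_append]
      refine ⟨hC, List.pairwise_singleton _ _, ?_⟩
      intro y hy z hz
      simp at hz
      rw [hz]
      exact hQ y hy
    obtain ⟨hp, hmem⟩ := ih hQ' hC'
    refine ⟨hp, fun e he => ?_⟩
    obtain ⟨h2, h1⟩ := hmem e he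
    refine ⟨by omega, ?_⟩
    rcases h1 with ⟨qe, hqe, heq⟩ | h
    · rcases List.mem_append.1 hqe with h | h
      · exact Or.inl ⟨qe, h, heq⟩
      · simp only [List.mem_singleton] at h
        subst h
        exact Or.inr (le_of_eq heq.symm)
    · right; omega
  | @deq Q i j a x P _ ih =>
    have hQ' : ∀ e ∈ Q, e.1 < i + 1 :=
      fun e he => Nat.lt_succ_of_lt (hQ e (List.mem_cons_of_mem _ he))
    obtain ⟨hhead, hC'⟩ := List.pairwise_cons.1 hC
    obtain ⟨hp, hmem⟩ := ih hQ' hC'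
    have hji : j < i := hQ (j, a) (List.mem_cons_self)
    constructor
    · refine List.pairwise_cons.2 ⟨fun e he => ?_, hp⟩
      obtain ⟨h2, h1⟩ := hmem e he
      refine ⟨?_, by omega⟩
      rcases h1 with ⟨qe, hqe, heq⟩ | h
      · rw [heq]; exact hhead qe hqe
      · omega
    · intro e he
      rcases List.mem_cons.1 he with h | h
      · rw [h]
        exact ⟨le_refl i, Or.inl ⟨(j, a), List.mem_cons_self, rfl⟩⟩
      · obtain ⟨h2, h1⟩ := hmem e h
        refine ⟨by omega, ?_⟩
        rcases h1 with ⟨qe, hqe, heq⟩ | hh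
        · exact Or.inl ⟨qe, List.mem_cons_of_mem _ hqe, heq⟩
        · right; omega

/-- in any accepting computation of the queue automaton, the
induced matching on input positions is non-nesting: no matched pair
`(j, ℓ)` strictly contains another matched pair `(p, q)`. -/
theorem run_matching_nonNesting {α : Type*} {w : List α} {P : List (ℕ × ℕ)}
    (hrun : Run ([] : List (ℕ × α)) 0 w P)
    {j ℓ p q : ℕ} (h₁ : (j, ℓ) ∈ P) (h₂ : (p, q) ∈ P)
    (hjp : j < p) (hpq : p < q) (hqℓ : q < ℓ) : False := by
  obtain ⟨hp, -⟩ := run_key hrun (by simp) (by simp)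
  have hsym : Symmetric (fun a b : ℕ × ℕ =>
      (a.1 < b.1 ∧ a.2 < b.2) ∨ (b.1 < a.1 ∧ b.2 < a.2)) := fun a b h => h.symm
  have hne : ((j, ℓ) : ℕ × ℕ) ≠ (p, q) := by
    intro h; injection h with h1 h2; omega
  haveI : Std.Symm (fun a b : ℕ × ℕ =>
      (a.1 < b.1 ∧ a.2 < b.2) ∨ (b.1 < a.1 ∧ b.2 < a.2)) := ⟨fun a b h => hsym h⟩
  have hp' : P.Pairwise (fun a b : ℕ × ℕ =>
      (a.1 < b.1 ∧ a.2 < b.2) ∨ (b.1 < a.1 ∧ b.2 < a.2)) := hp.imp Or.inl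
  have := hp'.forall h₁ h₂ hne
  rcases this with ⟨h1, h2⟩ | ⟨h1, h2⟩ <;> simp_all <;> omega
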